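/- (Theorem 2: performance guarantee of MEPP(m).) Assume n ≥ m+1. Let x*_{1:n} be a path maximizing the joint entropy H(Z_{x_{1:n}}) over all paths, and let x^E_{1:n} be a path maximizing the MEPP(m) surrogate objective H(Z_{x_{1:m}}) + Σ_{i=m+1}^{n} H(Z_{x_i} | Z_{x_{i−m:i−1}}) over all paths (this is the path returned by the MEPP(m) dynamic program). Then the paths x^E_{1:n} are ε-optimal for the maximum-entropy criterion: H(Z_{x*_{1:n}}) − H(Z_{x^E_{1:n}}) ≤ ε, where ε := [k(n−m)]² · log(1 + ξ²/(η(1+η))). -/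

import Mathlib

open Finset

/-- Covariance matrix of the GP: kernel plus sensor noise on the diagonal. -/
noncomputable def SigmaMat {D : Type*} [DecidableEq D] (K : D → D → ℝ) (σn2 : ℝ) :
    Matrix D D ℝ :=
  Matrix.of fun x y => K x y + if x = y then σn2 else 0

/-- Submatrix of covariances between the entries of two finsets of locations. -/
noncomputable def subMat {D : Type*} (Cov : Matrix D D ℝ) (a s : Finset D) :
    Matrix ↥a ↥s ℝ :=
  Matrix.of fun p q => Cov p.1 q.1

/-- Posterior covariance `Σ_{aa|s} = Σ_{aa} - Σ_{as} Σ_{ss}⁻¹ Σ_{sa}`. -/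
noncomputable def postCov {D : Type*} [DecidableEq D] (Cov : Matrix D D ℝ) (a s : Finset D) :
    Matrix ↥a ↥a ℝ :=
  subMat Cov a a - subMat Cov a s * (subMat Cov s s)⁻¹ * subMat Cov s a

/-- Gaussian conditional entropy `H(Z_a | Z_s) = (1/2) log((2πe)^{|a|} det Σ_{aa|s})`. -/
noncomputable def condEnt {D : Type*} [DecidableEq D] (Cov : Matrix D D ℝ) (a s : Finset D) : ℝ :=
  (1/2) * Real.log ((2 * Real.pi * Real.exp 1) ^ a.card * (postCov Cov a s).det)

/-- Gaussian joint entropy `H(Z_a)`. -/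
noncomputable def ent {D : Type*} [DecidableEq D] (Cov : Matrix D D ℝ) (a : Finset D) : ℝ :=
  condEnt Cov a ∅

/-- Mutual information `I(Z_a ; Z_b) = H(Z_a) - H(Z_a | Z_b)`. -/
noncomputable def mutInf {D : Type*} [DecidableEq D] (Cov : Matrix D D ℝ) (a b : Finset D) : ℝ :=
  ent Cov a - condEnt Cov a b

/-- Conditional mutual information `I(Z_a ; Z_b | Z_s) = H(Z_a | Z_s) - H(Z_a | Z_s, Z_b)`. -/
noncomputable def condMutInf {D : Type*} [DecidableEq D] (Cov : Matrix D D ℝ)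
    (a b s : Finset D) : ℝ :=
  condEnt Cov a s - condEnt Cov a (s ∪ b)

/-- Posterior variance `Σ_{yy|A}` of a single location `y`. -/
noncomputable def postVar {D : Type*} [DecidableEq D] (Cov : Matrix D D ℝ) (y : D)
    (A : Finset D) : ℝ :=
  postCov Cov {y} A ⟨y, Finset.mem_singleton_self y⟩ ⟨y, Finset.mem_singleton_self y⟩

/-- Concatenation `x_{i:j}` of the column selections from column `i` to column `j`. -/
def seg {D : Type*} [DecidableEq D] (x : ℕ → Finset D) (i j : ℕ) : Finset D :=
  (Finset.Icc i j).biUnion x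

/-- The set of the `r` locations of column `i`. -/
def column {D : Type*} [Fintype D] (col : D → ℕ) (i : ℕ) : Finset D :=
  Finset.univ.filter (fun p => col p = i)

/-- The complementary vector `u_i` of unobserved locations of column `i` for a path `x`. -/
def ucomp {D : Type*} [Fintype D] [DecidableEq D] (col : D → ℕ) (x : ℕ → Finset D) :
    ℕ → Finset D :=
  fun i => column col i \ x i

/-- A path selects, in every column `i = 1,…,n`, a vector of `k` distinct locations of
column `i`. -/
def IsPath {D : Type*} [Fintype D] (col : D → ℕ) (n k : ℕ) (x : ℕ → Finset D) : Prop :=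
  ∀ i, 1 ≤ i → i ≤ n → x i ⊆ column col i ∧ (x i).card = k

section Helpers

variable {D : Type*} [Fintype D] [DecidableEq D]

/-- zero-extension of a vector on a finset to the whole space -/
noncomputable def extD (B : Finset D) (w : ↥B → ℝ) : D → ℝ :=
  fun d => if h : d ∈ B then w ⟨d, h⟩ else 0

lemma sum_extD (B : Finset D) (w : ↥B → ℝ) (f : D → ℝ) :
    ∑ d : D, extD B w d * f d = ∑ i : ↥B, w i * f ↑i := by
  calc ∑ d : D, extD B w d * f d
      = ∑ d ∈ B, extD B w d * f d := by
        refine (Finset.sum_subset (Finset.subset_univ B) ?_).symm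
        intro d _ hd; simp [extD, hd]
    _ = ∑ i ∈ B.attach, extD B w ↑i * f ↑i := (Finset.sum_attach B _).symm
    _ = ∑ i : ↥B, w i * f ↑i := by
        rw [Finset.univ_eq_attach]
        refine Finset.sum_congr rfl fun i _ => ?_
        simp [extD, i.2]

/-- zero-extension between nested finsets -/
noncomputable def extF {B C : Finset D} (_ : B ⊆ C) (w : ↥B → ℝ) : ↥C → ℝ :=
  fun i => if h : ↑i ∈ B then w ⟨↑i, h⟩ else 0

lemma sum_extF {B C : Finset D} (hBC : B ⊆ C) (w : ↥B → ℝ) (f : D → ℝ) :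
    ∑ i : ↥C, extF hBC w i * f ↑i = ∑ i : ↥B, w i * f ↑i := by
  calc ∑ i : ↥C, extF hBC w i * f ↑i
      = ∑ d ∈ C, extD B w d * f d := by
        rw [Finset.univ_eq_attach, ← Finset.sum_attach C (fun d => extD B w d * f d)]
        refine Finset.sum_congr rfl fun i _ => ?_
        simp [extF, extD]
    _ = ∑ d ∈ B, extD B w d * f d := by
        refine (Finset.sum_subset hBC ?_).symm
        intro d _ hd; simp [extD, hd]
    _ = ∑ i : ↥B, w i * f ↑i := by
        rw [← Finset.sum_attach B (fun d => extD B w d * f d), Finset.univ_eq_attach]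
        refine Finset.sum_congr rfl fun i _ => ?_
        simp [extD, i.2]

end Helpers
set_option linter.unusedSectionVars false

section Mx
open Matrix

variable {D : Type*} [Fintype D] [DecidableEq D]
variable (K : D → D → ℝ) (σs2 σn2 : ℝ)

lemma sigma_symm (hKsymm : ∀ p q : D, K p q = K q p) (p q : D) :
    SigmaMat K σn2 p q = SigmaMat K σn2 q p := by
  simp only [SigmaMat, Matrix.of_apply, hKsymm p q, eq_comm (a := p)]

lemma sigma_decomp :
    SigmaMat K σn2 = Matrix.of K + Matrix.diagonal (fun _ : D => σn2) := by
  ext p q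
  by_cases h : p = q <;> simp [SigmaMat, Matrix.diagonal, h]

lemma quad_full (hKpsd : (Matrix.of K).PosSemidef) (y : D → ℝ) :
    σn2 * ∑ d : D, y d ^ 2 ≤ y ⬝ᵥ (SigmaMat K σn2) *ᵥ y := by
  rw [sigma_decomp, Matrix.add_mulVec, dotProduct_add]
  have h1 : 0 ≤ y ⬝ᵥ (Matrix.of K) *ᵥ y := by
    have := hKpsd.dotProduct_mulVec_nonneg y
    simpa using this
  have h2 : y ⬝ᵥ (Matrix.diagonal (fun _ : D => σn2)) *ᵥ y = σn2 * ∑ d : D, y d ^ 2 := by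
    simp only [dotProduct, Matrix.mulVec_diagonal]
    rw [Finset.mul_sum]
    refine Finset.sum_congr rfl fun d _ => by ring
  linarith

lemma dot_subMat (M : Matrix D D ℝ) (s : Finset D) (x : ↥s → ℝ) :
    x ⬝ᵥ (subMat M s s) *ᵥ x = extD s x ⬝ᵥ M *ᵥ extD s x := by
  have inner : ∀ d : D, (M *ᵥ extD s x) d = ∑ j : ↥s, x j * M d ↑j := by
    intro d
    simp only [Matrix.mulVec, dotProduct]
    rw [← sum_extD s x (fun e => M d e)]
    exact Finset.sum_congr rfl fun e _ => by ring
  calc x ⬝ᵥ (subMat M s s) *ᵥ x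
      = ∑ i : ↥s, x i * ∑ j : ↥s, x j * M ↑i ↑j := by
        simp only [Matrix.mulVec, dotProduct, subMat, Matrix.of_apply]
        exact Finset.sum_congr rfl fun i _ => by
          congr 1
          exact Finset.sum_congr rfl fun j _ => by ring
    _ = extD s x ⬝ᵥ M *ᵥ extD s x := by
        simp only [dotProduct]
        rw [← sum_extD s x (fun d => ∑ j : ↥s, x j * M d ↑j)]
        exact Finset.sum_congr rfl fun d _ => by rw [inner]

lemma sq_sum_ext (s : Finset D) (x : ↥s → ℝ) :
    ∑ d : D, extD s x d ^ 2 = ∑ i : ↥s, x i ^ 2 := by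
  have := sum_extD s x (extD s x)
  calc ∑ d : D, extD s x d ^ 2 = ∑ d : D, extD s x d * extD s x d := by
        exact Finset.sum_congr rfl fun d _ => sq (extD s x d)
    _ = ∑ i : ↥s, x i * extD s x ↑i := this
    _ = ∑ i : ↥s, x i ^ 2 := by
        refine Finset.sum_congr rfl fun i _ => ?_
        simp [extD, i.2, sq]

lemma quad_sub_lower (hKpsd : (Matrix.of K).PosSemidef) (s : Finset D) (x : ↥s → ℝ) :
    σn2 * ∑ i : ↥s, x i ^ 2 ≤ x ⬝ᵥ (subMat (SigmaMat K σn2) s s) *ᵥ x := by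
  rw [dot_subMat, ← sq_sum_ext s x]
  exact quad_full K σn2 hKpsd (extD s x)

lemma subPD (hKsymm : ∀ p q : D, K p q = K q p) (hKpsd : (Matrix.of K).PosSemidef)
    (hn : 0 < σn2) (s : Finset D) : (subMat (SigmaMat K σn2) s s).PosDef := by
  refine Matrix.PosDef.of_dotProduct_mulVec_pos ?_ ?_
  · ext i j
    simp only [Matrix.conjTranspose_apply, subMat, Matrix.of_apply, star_trivial]
    exact sigma_symm K σn2 hKsymm _ _
  · intro x hx
    have hs : 0 < ∑ i : ↥s, x i ^ 2 := by
      have : ∃ i, x i ≠ 0 := Function.ne_iff.mp hx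
      obtain ⟨i, hi⟩ := this
      refine Finset.sum_pos' (fun j _ => sq_nonneg _) ⟨i, Finset.mem_univ i, ?_⟩
      positivity
    have := quad_sub_lower K σn2 hKpsd s x
    have hst : star x = x := by simp
    rw [hst]
    nlinarith

end Mx
section Schur
open Matrix

variable {D : Type*} [Fintype D] [DecidableEq D]
variable (K : D → D → ℝ) (σs2 σn2 : ℝ)

/-- equivalence between a disjoint union of finsets and the union -/
def unionEquiv (a s : Finset D) (h : Disjoint a s) : ↥s ⊕ ↥a ≃ ↥(a ∪ s) where
  toFun := Sum.elim (fun i => ⟨↑i, Finset.mem_union_right a i.2⟩)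
    (fun i => ⟨↑i, Finset.mem_union_left s i.2⟩)
  invFun := fun x => if h' : ↑x ∈ s then Sum.inl ⟨↑x, h'⟩ else
    Sum.inr ⟨↑x, (Finset.mem_union.mp x.2).resolve_right h'⟩
  left_inv := by
    rintro (i | i)
    · simp
    · have : ↑i ∉ s := Finset.disjoint_left.mp h i.2
      simp [this]
  right_inv := by
    rintro ⟨x, hx⟩
    by_cases h' : x ∈ s <;> simp [h']

lemma submatrix_union_eq (a s : Finset D) (h : Disjoint a s) :
    (subMat (SigmaMat K σn2) (a ∪ s) (a ∪ s)).submatrix (unionEquiv a s h) (unionEquiv a s h) =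
      Matrix.fromBlocks (subMat (SigmaMat K σn2) s s) (subMat (SigmaMat K σn2) s a)
        (subMat (SigmaMat K σn2) a s) (subMat (SigmaMat K σn2) a a) := by
  ext i j
  cases i <;> cases j <;> rfl

lemma det_union (hKsymm : ∀ p q : D, K p q = K q p) (hKpsd : (Matrix.of K).PosSemidef)
    (hn : 0 < σn2) (a s : Finset D) (h : Disjoint a s) :
    (subMat (SigmaMat K σn2) (a ∪ s) (a ∪ s)).det =
      (subMat (SigmaMat K σn2) s s).det * (postCov (SigmaMat K σn2) a s).det := by
  have hPD := subPD K σn2 hKsymm hKpsd hn s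
  have : Invertible (subMat (SigmaMat K σn2) s s) := hPD.isUnit.invertible
  rw [← Matrix.det_submatrix_equiv_self (unionEquiv a s h), submatrix_union_eq,
    Matrix.det_fromBlocks₁₁, invOf_eq_nonsing_inv]
  rfl

lemma dd_pos (hKsymm : ∀ p q : D, K p q = K q p) (hKpsd : (Matrix.of K).PosSemidef)
    (hn : 0 < σn2) (s : Finset D) : 0 < (subMat (SigmaMat K σn2) s s).det :=
  (subPD K σn2 hKsymm hKpsd hn s).det_pos

lemma postCov_empty (Cov : Matrix D D ℝ) (a : Finset D) :
    postCov Cov a ∅ = subMat Cov a a := by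
  have : IsEmpty ↥(∅ : Finset D) := by
    rw [Finset.isEmpty_coe_sort]
  ext i j
  simp [postCov, Matrix.mul_apply]

local instance singUnique (q : D) : Unique ↥({q} : Finset D) :=
  ⟨⟨⟨q, Finset.mem_singleton_self q⟩⟩, fun x => Subtype.ext (Finset.mem_singleton.mp x.2)⟩

lemma det_postCov_singleton (Cov : Matrix D D ℝ) (q : D) (B : Finset D) :
    (postCov Cov {q} B).det = postVar Cov q B := by
  rw [Matrix.det_unique]
  rfl

lemma dd_insert (hKsymm : ∀ p q : D, K p q = K q p) (hKpsd : (Matrix.of K).PosSemidef)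
    (hn : 0 < σn2) (q : D) (B : Finset D) (hq : q ∉ B) :
    (subMat (SigmaMat K σn2) (insert q B) (insert q B)).det =
      (subMat (SigmaMat K σn2) B B).det * postVar (SigmaMat K σn2) q B := by
  have h : Disjoint ({q} : Finset D) B := Finset.disjoint_singleton_left.mpr hq
  rw [← det_postCov_singleton, ← det_union K σn2 hKsymm hKpsd hn {q} B h, Finset.insert_eq]

lemma postVar_pos (hKsymm : ∀ p q : D, K p q = K q p) (hKpsd : (Matrix.of K).PosSemidef)
    (hn : 0 < σn2) (q : D) (B : Finset D) (hq : q ∉ B) :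
    0 < postVar (SigmaMat K σn2) q B := by
  have h1 := dd_insert K σn2 hKsymm hKpsd hn q B hq
  have h2 := dd_pos K σn2 hKsymm hKpsd hn B
  have h3 := dd_pos K σn2 hKsymm hKpsd hn (insert q B)
  nlinarith

lemma postVar_formula (hKsymm : ∀ p q : D, K p q = K q p) (q : D) (B : Finset D) :
    postVar (SigmaMat K σn2) q B = SigmaMat K σn2 q q -
      (fun i : ↥B => SigmaMat K σn2 q ↑i) ⬝ᵥ
        (subMat (SigmaMat K σn2) B B)⁻¹ *ᵥ (fun i : ↥B => SigmaMat K σn2 q ↑i) := by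
  set N := (subMat (SigmaMat K σn2) B B)⁻¹
  have : postVar (SigmaMat K σn2) q B = SigmaMat K σn2 q q -
      (subMat (SigmaMat K σn2) {q} B * N * subMat (SigmaMat K σn2) B {q})
        ⟨q, Finset.mem_singleton_self q⟩ ⟨q, Finset.mem_singleton_self q⟩ := rfl
  rw [this]
  congr 1
  rw [Matrix.mul_apply]
  simp only [Matrix.mul_apply, subMat, Matrix.of_apply, dotProduct, Matrix.mulVec, Finset.sum_mul]
  rw [Finset.sum_comm]
  refine Finset.sum_congr rfl fun i _ => ?_
  rw [Finset.mul_sum]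
  refine Finset.sum_congr rfl fun j _ => ?_
  rw [sigma_symm K σn2 hKsymm (↑j) q]
  ring

end Schur
section Var
open Matrix

variable {D : Type*} [Fintype D] [DecidableEq D]
variable (K : D → D → ℝ) (σs2 σn2 : ℝ)

/-- the quadratic objective whose minimum is the posterior variance -/
noncomputable def fq (q : D) (B : Finset D) (w : ↥B → ℝ) : ℝ :=
  SigmaMat K σn2 q q - 2 * (w ⬝ᵥ (fun i : ↥B => SigmaMat K σn2 q ↑i))
    + w ⬝ᵥ (subMat (SigmaMat K σn2) B B) *ᵥ w

lemma dot_symm (M : Matrix D D ℝ) {s : Finset D} (hM : ∀ i j : ↥s, subMat M s s i j = subMat M s s j i)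
    (a b : ↥s → ℝ) : a ⬝ᵥ (subMat M s s) *ᵥ b = b ⬝ᵥ (subMat M s s) *ᵥ a := by
  simp only [dotProduct, Matrix.mulVec, Finset.mul_sum]
  rw [Finset.sum_comm]
  exact Finset.sum_congr rfl fun i _ => Finset.sum_congr rfl fun j _ => by rw [hM j i]; ring

lemma fq_ge (hKsymm : ∀ p q : D, K p q = K q p) (hKpsd : (Matrix.of K).PosSemidef)
    (hn : 0 < σn2) (q : D) (B : Finset D) (hq : q ∉ B) (w : ↥B → ℝ) :
    σn2 ≤ fq K σn2 q B w := by
  set e1 : D → ℝ := fun d => if d = q then 1 else 0 with he1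
  set u : D → ℝ := extD B w with hu
  set y : D → ℝ := e1 - u with hy
  have hT11 : e1 ⬝ᵥ (SigmaMat K σn2) *ᵥ e1 = SigmaMat K σn2 q q := by
    simp [he1, dotProduct, Matrix.mulVec, mul_ite, ite_mul]
  have hT12 : e1 ⬝ᵥ (SigmaMat K σn2) *ᵥ u =
      w ⬝ᵥ (fun i : ↥B => SigmaMat K σn2 q ↑i) := by
    simp only [he1, dotProduct, Matrix.mulVec, ite_mul, one_mul, zero_mul]
    rw [Finset.sum_ite_eq' Finset.univ q]
    simp only [Finset.mem_univ, if_true, hu, dotProduct]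
    rw [← sum_extD B w (fun e => SigmaMat K σn2 q e)]
    exact Finset.sum_congr rfl fun e _ => by ring
  have hT21 : u ⬝ᵥ (SigmaMat K σn2) *ᵥ e1 =
      w ⬝ᵥ (fun i : ↥B => SigmaMat K σn2 q ↑i) := by
    have inner : ∀ d : D, (SigmaMat K σn2 *ᵥ e1) d = SigmaMat K σn2 d q := by
      intro d
      simp only [Matrix.mulVec, dotProduct, he1, mul_ite, mul_one, mul_zero]
      simp
    calc u ⬝ᵥ (SigmaMat K σn2) *ᵥ e1 = ∑ d : D, extD B w d * SigmaMat K σn2 d q := by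
          simp only [dotProduct, hu]
          exact Finset.sum_congr rfl fun d _ => by rw [inner d]
      _ = ∑ i : ↥B, w i * SigmaMat K σn2 ↑i q := sum_extD B w _
      _ = w ⬝ᵥ (fun i : ↥B => SigmaMat K σn2 q ↑i) := by
          simp only [dotProduct]
          exact Finset.sum_congr rfl fun i _ => by rw [sigma_symm K σn2 hKsymm]
  have hT22 : u ⬝ᵥ (SigmaMat K σn2) *ᵥ u = w ⬝ᵥ (subMat (SigmaMat K σn2) B B) *ᵥ w :=
    (dot_subMat (SigmaMat K σn2) B w).symm
  have hexp : y ⬝ᵥ (SigmaMat K σn2) *ᵥ y = fq K σn2 q B w := by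
    rw [hy, sub_dotProduct, Matrix.mulVec_sub, dotProduct_sub, dotProduct_sub,
      hT11, hT12, hT21, hT22, fq]
    ring
  have hlow := quad_full K σn2 hKpsd y
  have hyq : y q = 1 := by
    rw [hy]
    simp only [Pi.sub_apply, he1, hu]
    simp [extD, hq]
  have hsq : (1:ℝ) ≤ ∑ d : D, y d ^ 2 := by
    have : y q ^ 2 ≤ ∑ d : D, y d ^ 2 :=
      Finset.single_le_sum (f := fun d => y d ^ 2) (fun d _ => sq_nonneg _) (Finset.mem_univ q)
    rw [hyq] at this; simpa using this
  have hmul : σn2 * 1 ≤ σn2 * ∑ d : D, y d ^ 2 := mul_le_mul_of_nonneg_left hsq hn.le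
  linarith [hexp ▸ hlow, hmul]

lemma fq_opt (hKsymm : ∀ p q : D, K p q = K q p) (hKpsd : (Matrix.of K).PosSemidef)
    (hn : 0 < σn2) (q : D) (B : Finset D) :
    fq K σn2 q B ((subMat (SigmaMat K σn2) B B)⁻¹ *ᵥ (fun i : ↥B => SigmaMat K σn2 q ↑i)) =
      postVar (SigmaMat K σn2) q B := by
  set v : ↥B → ℝ := fun i => SigmaMat K σn2 q ↑i
  set N := (subMat (SigmaMat K σn2) B B)⁻¹
  have hunit : IsUnit (subMat (SigmaMat K σn2) B B).det :=
    (dd_pos K σn2 hKsymm hKpsd hn B).ne'.isUnit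
  have hSN : subMat (SigmaMat K σn2) B B *ᵥ (N *ᵥ v) = v := by
    rw [Matrix.mulVec_mulVec, Matrix.mul_nonsing_inv _ hunit, Matrix.one_mulVec]
  rw [postVar_formula K σn2 hKsymm]
  simp only [fq]
  rw [hSN, dotProduct_comm v (N *ᵥ v)]
  ring

lemma fq_min (hKsymm : ∀ p q : D, K p q = K q p) (hKpsd : (Matrix.of K).PosSemidef)
    (hn : 0 < σn2) (q : D) (B : Finset D) (w : ↥B → ℝ) :
    postVar (SigmaMat K σn2) q B ≤ fq K σn2 q B w := by
  set v : ↥B → ℝ := fun i => SigmaMat K σn2 q ↑i with hv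
  set N := (subMat (SigmaMat K σn2) B B)⁻¹ with hN
  set w0 : ↥B → ℝ := N *ᵥ v with hw0
  have hunit : IsUnit (subMat (SigmaMat K σn2) B B).det :=
    (dd_pos K σn2 hKsymm hKpsd hn B).ne'.isUnit
  have hSw0 : subMat (SigmaMat K σn2) B B *ᵥ w0 = v := by
    rw [hw0, Matrix.mulVec_mulVec, Matrix.mul_nonsing_inv _ hunit, Matrix.one_mulVec]
  have hsymm : ∀ i j : ↥B, subMat (SigmaMat K σn2) B B i j = subMat (SigmaMat K σn2) B B j i :=
    fun i j => sigma_symm K σn2 hKsymm _ _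
  have hpsd : 0 ≤ (w - w0) ⬝ᵥ (subMat (SigmaMat K σn2) B B) *ᵥ (w - w0) := by
    have := (subPD K σn2 hKsymm hKpsd hn B).posSemidef.dotProduct_mulVec_nonneg (w - w0)
    simpa using this
  have hexp : (w - w0) ⬝ᵥ (subMat (SigmaMat K σn2) B B) *ᵥ (w - w0) =
      fq K σn2 q B w - fq K σn2 q B w0 := by
    rw [sub_dotProduct, Matrix.mulVec_sub, dotProduct_sub, dotProduct_sub]
    have h1 : w0 ⬝ᵥ (subMat (SigmaMat K σn2) B B) *ᵥ w =
        w ⬝ᵥ (subMat (SigmaMat K σn2) B B) *ᵥ w0 := dot_symm _ hsymm w0 w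
    have h2 : w ⬝ᵥ (subMat (SigmaMat K σn2) B B) *ᵥ w0 = w ⬝ᵥ v := by rw [hSw0]
    have h3 : w0 ⬝ᵥ (subMat (SigmaMat K σn2) B B) *ᵥ w0 = w0 ⬝ᵥ v := by rw [hSw0]
    rw [h1, h2, h3]
    simp only [fq]
    rw [h3]
    ring
  have := fq_opt K σn2 hKsymm hKpsd hn q B
  rw [← hw0] at this
  linarith [hpsd, hexp.symm ▸ hpsd]

lemma postVar_ge_noise (hKsymm : ∀ p q : D, K p q = K q p) (hKpsd : (Matrix.of K).PosSemidef)
    (hn : 0 < σn2) (q : D) (B : Finset D) (hq : q ∉ B) :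
    σn2 ≤ postVar (SigmaMat K σn2) q B := by
  rw [← fq_opt K σn2 hKsymm hKpsd hn q B]
  exact fq_ge K σn2 hKsymm hKpsd hn q B hq _

lemma postVar_mono (hKsymm : ∀ p q : D, K p q = K q p) (hKpsd : (Matrix.of K).PosSemidef)
    (hn : 0 < σn2) (q : D) {B C : Finset D} (hBC : B ⊆ C) (hq : q ∉ C) :
    postVar (SigmaMat K σn2) q C ≤ postVar (SigmaMat K σn2) q B := by
  set vB : ↥B → ℝ := fun i => SigmaMat K σn2 q ↑i
  set wB : ↥B → ℝ := (subMat (SigmaMat K σn2) B B)⁻¹ *ᵥ vB with hwB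
  have key : fq K σn2 q C (extF hBC wB) = fq K σn2 q B wB := by
    have hdot : (extF hBC wB) ⬝ᵥ (fun i : ↥C => SigmaMat K σn2 q ↑i) = wB ⬝ᵥ vB := by
      simpa [dotProduct] using sum_extF hBC wB (fun d => SigmaMat K σn2 q d)
    have hext : extD C (extF hBC wB) = extD B wB := by
      funext d
      by_cases hdC : d ∈ C
      · by_cases hdB : d ∈ B <;> simp [extD, extF, hdC, hdB]
      · have hdB : d ∉ B := fun h => hdC (hBC h)
        simp [extD, hdC, hdB]
    have hquad : (extF hBC wB) ⬝ᵥ (subMat (SigmaMat K σn2) C C) *ᵥ (extF hBC wB) =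
        wB ⬝ᵥ (subMat (SigmaMat K σn2) B B) *ᵥ wB := by
      rw [dot_subMat, dot_subMat, hext]
    rw [fq, fq, hdot, hquad]
  calc postVar (SigmaMat K σn2) q C ≤ fq K σn2 q C (extF hBC wB) :=
        fq_min K σn2 hKsymm hKpsd hn q C _
    _ = fq K σn2 q B wB := key
    _ = postVar (SigmaMat K σn2) q B := fq_opt K σn2 hKsymm hKpsd hn q B

end Var
section Bounds
open Matrix

variable {D : Type*} [Fintype D] [DecidableEq D]
variable (K : D → D → ℝ) (σs2 σn2 : ℝ)

lemma postVar_empty (p : D) : postVar (SigmaMat K σn2) p ∅ = SigmaMat K σn2 p p := by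
  unfold postVar
  rw [postCov_empty]
  rfl

lemma sigma_diag (hKdiag : ∀ p : D, K p p = σs2) (p : D) :
    SigmaMat K σn2 p p = σs2 + σn2 := by
  simp [SigmaMat, hKdiag]

lemma twoPoint (hKsymm : ∀ p q : D, K p q = K q p) (hKdiag : ∀ p : D, K p p = σs2)
    (hs : 0 < σs2) (hn : 0 < σn2) (p q : D) (hpq : p ≠ q) :
    SigmaMat K σn2 p p - postVar (SigmaMat K σn2) p {q} = K p q ^ 2 / (σs2 + σn2) := by
  have hc : (0:ℝ) < σs2 + σn2 := by linarith
  have hsub1 : subMat (SigmaMat K σn2) {q} {q} = (σs2 + σn2) • (1 : Matrix ↥({q}:Finset D) ↥({q}:Finset D) ℝ) := by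
    ext i j
    have hi : (↑i : D) = q := Finset.mem_singleton.mp i.2
    have hj : (↑j : D) = q := Finset.mem_singleton.mp j.2
    have hij : i = j := Subtype.ext (hi.trans hj.symm)
    subst hij
    simp [subMat, hi, sigma_diag K σs2 σn2 hKdiag, Matrix.one_apply]
  have hinv : (subMat (SigmaMat K σn2) {q} {q})⁻¹ =
      (σs2 + σn2)⁻¹ • (1 : Matrix ↥({q}:Finset D) ↥({q}:Finset D) ℝ) := by
    apply Matrix.inv_eq_right_inv
    rw [hsub1, smul_mul_smul_comm, one_mul, mul_inv_cancel₀ hc.ne', one_smul]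
  rw [postVar_formula K σn2 hKsymm, hinv]
  have hdef : ∀ i : ↥({q}:Finset D), (↑i : D) = q := fun i => Finset.mem_singleton.mp i.2
  have hvq : ∀ i : ↥({q}:Finset D), SigmaMat K σn2 p ↑i = K p q := by
    intro i
    rw [hdef i]
    simp [SigmaMat, hpq]
  rw [Matrix.smul_mulVec, Matrix.one_mulVec, dotProduct_smul]
  have hvv : (fun i : ↥({q}:Finset D) => SigmaMat K σn2 p ↑i) ⬝ᵥ
      (fun i : ↥({q}:Finset D) => SigmaMat K σn2 p ↑i) = K p q ^ 2 := by
    simp only [dotProduct, hvq]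
    rw [Finset.sum_const]
    have h1 : Fintype.card ↥({q}:Finset D) = 1 := by simp
    simp [Finset.card_univ, h1, sq]
  rw [hvv, smul_eq_mul]
  field_simp
  ring

lemma submod_tele
    (hsub : ∀ (p q : D) (A : Finset D), p ∉ A → q ∉ A → p ≠ q →
      postVar (SigmaMat K σn2) p A - postVar (SigmaMat K σn2) p (insert q A)
        ≤ postVar (SigmaMat K σn2) p ∅ - postVar (SigmaMat K σn2) p {q})
    (p : D) (E : Finset D) :
    ∀ B : Finset D, Disjoint E B → p ∉ B → p ∉ E →
      postVar (SigmaMat K σn2) p B - postVar (SigmaMat K σn2) p (B ∪ E)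
        ≤ ∑ q ∈ E, (postVar (SigmaMat K σn2) p ∅ - postVar (SigmaMat K σn2) p {q}) := by
  induction E using Finset.induction_on with
  | empty => intro B _ _ _; simp
  | @insert q E hqE ih =>
    intro B hdisj hpB hpE
    have hqB : q ∉ B := Finset.disjoint_left.mp hdisj (Finset.mem_insert_self q E)
    have hEB : Disjoint E B := Finset.disjoint_of_subset_left (Finset.subset_insert q E) hdisj
    have hpq : p ≠ q := fun h => hpE (h ▸ Finset.mem_insert_self q E)
    have hpE' : p ∉ E := fun h => hpE (Finset.mem_insert_of_mem h)
    have hstep := hsub p q (B ∪ E) (by simp [hpB, hpE']) (by simp [hqB, hqE]) hpq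
    have hun : B ∪ insert q E = insert q (B ∪ E) := by
      rw [Finset.union_insert]
    have hih := ih B hEB hpB hpE'
    rw [hun, Finset.sum_insert hqE]
    linarith

lemma point_bound (hKsymm : ∀ p q : D, K p q = K q p) (hKpsd : (Matrix.of K).PosSemidef)
    (hn : 0 < σn2)
    (hsub : ∀ (p q : D) (A : Finset D), p ∉ A → q ∉ A → p ≠ q →
      postVar (SigmaMat K σn2) p A - postVar (SigmaMat K σn2) p (insert q A)
        ≤ postVar (SigmaMat K σn2) p ∅ - postVar (SigmaMat K σn2) p {q})
    (δ : ℝ) (hδ : 0 ≤ δ) (p : D) (B' C' : Finset D) (hBC : B' ⊆ C') (hp : p ∉ C')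
    (hfar : ∀ q ∈ C' \ B', SigmaMat K σn2 p p - postVar (SigmaMat K σn2) p {q} ≤ δ) :
    Real.log (postVar (SigmaMat K σn2) p B') ≤ Real.log (postVar (SigmaMat K σn2) p C')
      + ((C' \ B').card : ℝ) * Real.log (1 + δ / σn2) := by
  set pvB := postVar (SigmaMat K σn2) p B' with hpvB
  set pvC := postVar (SigmaMat K σn2) p C' with hpvC
  have hpB : p ∉ B' := fun h => hp (hBC h)
  have hBpos : 0 < pvB := postVar_pos K σn2 hKsymm hKpsd hn p B' hpB
  have hCge : σn2 ≤ pvC := postVar_ge_noise K σn2 hKsymm hKpsd hn p C' hp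
  have hCpos : 0 < pvC := lt_of_lt_of_le hn hCge
  set N := (C' \ B').card with hN
  set t := δ / σn2 with ht
  have htnn : 0 ≤ t := div_nonneg hδ hn.le
  -- telescoping bound
  have htel : pvB - pvC ≤ (N : ℝ) * δ := by
    have hd : Disjoint (C' \ B') B' := Finset.sdiff_disjoint
    have hu : B' ∪ (C' \ B') = C' := Finset.union_sdiff_of_subset hBC
    have hpE : p ∉ C' \ B' := fun h => hp (Finset.mem_sdiff.mp h).1
    have h1 := submod_tele K σn2 hsub p (C' \ B') B' hd hpB hpE
    rw [hu] at h1
    have h2 : ∑ q ∈ C' \ B', (postVar (SigmaMat K σn2) p ∅ - postVar (SigmaMat K σn2) p {q})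
        ≤ (N : ℝ) * δ := by
      calc ∑ q ∈ C' \ B', (postVar (SigmaMat K σn2) p ∅ - postVar (SigmaMat K σn2) p {q})
          ≤ ∑ _q ∈ C' \ B', δ := by
            refine Finset.sum_le_sum fun q hq => ?_
            rw [postVar_empty]
            exact hfar q hq
        _ = (N : ℝ) * δ := by rw [Finset.sum_const, nsmul_eq_mul]
    linarith
  have hmul : pvB ≤ pvC * (1 + (N : ℝ) * t) := by
    have : σn2 * ((N:ℝ) * t) ≤ pvC * ((N:ℝ) * t) := by
      apply mul_le_mul_of_nonneg_right hCge
      positivity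
    have hNd : σn2 * ((N:ℝ) * t) = (N:ℝ) * δ := by
      rw [ht]
      field_simp
    nlinarith
  have hpow : 1 + (N : ℝ) * t ≤ (1 + t) ^ N := by
    have := one_add_mul_le_pow (a := t) (by linarith) N
    simpa [mul_comm] using this
  have hfinal : pvB ≤ pvC * (1 + t) ^ N := by
    have h1tpos : (0:ℝ) < 1 + t := by linarith
    nlinarith [pow_pos h1tpos N]
  calc Real.log pvB ≤ Real.log (pvC * (1 + t) ^ N) :=
        Real.log_le_log hBpos hfinal
    _ = Real.log pvC + (N : ℝ) * Real.log (1 + t) := by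
        rw [Real.log_mul hCpos.ne' (by positivity), Real.log_pow]
  -- done

lemma diff_mono (hKsymm : ∀ p q : D, K p q = K q p) (hKpsd : (Matrix.of K).PosSemidef)
    (hn : 0 < σn2) (a : Finset D) :
    ∀ B C : Finset D, B ⊆ C → Disjoint a C →
      Real.log (subMat (SigmaMat K σn2) (a ∪ C) (a ∪ C)).det
          - Real.log (subMat (SigmaMat K σn2) C C).det
        ≤ Real.log (subMat (SigmaMat K σn2) (a ∪ B) (a ∪ B)).det
          - Real.log (subMat (SigmaMat K σn2) B B).det := by
  induction a using Finset.induction_on with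
  | empty => intro B C _ _; rw [Finset.empty_union, Finset.empty_union]; simp
  | @insert p a hpa ih =>
    intro B C hBC hdisj
    have hpC : p ∉ C := Finset.disjoint_left.mp hdisj (Finset.mem_insert_self p a)
    have hpB : p ∉ B := fun h => hpC (hBC h)
    have haC : Disjoint a C := Finset.disjoint_of_subset_left (Finset.subset_insert p a) hdisj
    have hpaB : p ∉ a ∪ B := by simp [hpa, hpB]
    have hpaC : p ∉ a ∪ C := by simp [hpa, hpC]
    have huB : insert p a ∪ B = insert p (a ∪ B) := by rw [Finset.insert_union]
    have huC : insert p a ∪ C = insert p (a ∪ C) := by rw [Finset.insert_union]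
    have hiB := dd_insert K σn2 hKsymm hKpsd hn p (a ∪ B) hpaB
    have hiC := dd_insert K σn2 hKsymm hKpsd hn p (a ∪ C) hpaC
    have hposB := dd_pos K σn2 hKsymm hKpsd hn (a ∪ B)
    have hposC := dd_pos K σn2 hKsymm hKpsd hn (a ∪ C)
    have hpvB := postVar_pos K σn2 hKsymm hKpsd hn p (a ∪ B) hpaB
    have hpvC := postVar_pos K σn2 hKsymm hKpsd hn p (a ∪ C) hpaC
    have hlogB : Real.log (subMat (SigmaMat K σn2) (insert p a ∪ B) (insert p a ∪ B)).det
        = Real.log (subMat (SigmaMat K σn2) (a ∪ B) (a ∪ B)).det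
          + Real.log (postVar (SigmaMat K σn2) p (a ∪ B)) := by
      rw [huB, hiB, Real.log_mul hposB.ne' hpvB.ne']
    have hlogC : Real.log (subMat (SigmaMat K σn2) (insert p a ∪ C) (insert p a ∪ C)).det
        = Real.log (subMat (SigmaMat K σn2) (a ∪ C) (a ∪ C)).det
          + Real.log (postVar (SigmaMat K σn2) p (a ∪ C)) := by
      rw [huC, hiC, Real.log_mul hposC.ne' hpvC.ne']
    have hmono : postVar (SigmaMat K σn2) p (a ∪ C) ≤ postVar (SigmaMat K σn2) p (a ∪ B) :=
      postVar_mono K σn2 hKsymm hKpsd hn p (Finset.union_subset_union_right hBC) hpaC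
    have hlogmono : Real.log (postVar (SigmaMat K σn2) p (a ∪ C))
        ≤ Real.log (postVar (SigmaMat K σn2) p (a ∪ B)) := Real.log_le_log hpvC hmono
    have := ih B C hBC haC
    rw [hlogB, hlogC]
    linarith

lemma diff_bound (hKsymm : ∀ p q : D, K p q = K q p) (hKpsd : (Matrix.of K).PosSemidef)
    (hn : 0 < σn2)
    (hsub : ∀ (p q : D) (A : Finset D), p ∉ A → q ∉ A → p ≠ q →
      postVar (SigmaMat K σn2) p A - postVar (SigmaMat K σn2) p (insert q A)
        ≤ postVar (SigmaMat K σn2) p ∅ - postVar (SigmaMat K σn2) p {q})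
    (δ : ℝ) (hδ : 0 ≤ δ) (a : Finset D) :
    ∀ B C : Finset D, B ⊆ C → Disjoint a C →
      (∀ p ∈ a, ∀ q ∈ C \ B, SigmaMat K σn2 p p - postVar (SigmaMat K σn2) p {q} ≤ δ) →
      (Real.log (subMat (SigmaMat K σn2) (a ∪ B) (a ∪ B)).det
          - Real.log (subMat (SigmaMat K σn2) B B).det)
        - (Real.log (subMat (SigmaMat K σn2) (a ∪ C) (a ∪ C)).det
          - Real.log (subMat (SigmaMat K σn2) C C).det)
        ≤ (a.card : ℝ) * (((C \ B).card : ℝ) * Real.log (1 + δ / σn2)) := by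
  induction a using Finset.induction_on with
  | empty => intro B C _ _ _; rw [Finset.empty_union, Finset.empty_union]; simp
  | @insert p a hpa ih =>
    intro B C hBC hdisj hfar
    have hpC : p ∉ C := Finset.disjoint_left.mp hdisj (Finset.mem_insert_self p a)
    have hpB : p ∉ B := fun h => hpC (hBC h)
    have haC : Disjoint a C := Finset.disjoint_of_subset_left (Finset.subset_insert p a) hdisj
    have hpaB : p ∉ a ∪ B := by simp [hpa, hpB]
    have hpaC : p ∉ a ∪ C := by simp [hpa, hpC]
    have huB : insert p a ∪ B = insert p (a ∪ B) := by rw [Finset.insert_union]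
    have huC : insert p a ∪ C = insert p (a ∪ C) := by rw [Finset.insert_union]
    have hiB := dd_insert K σn2 hKsymm hKpsd hn p (a ∪ B) hpaB
    have hiC := dd_insert K σn2 hKsymm hKpsd hn p (a ∪ C) hpaC
    have hposB := dd_pos K σn2 hKsymm hKpsd hn (a ∪ B)
    have hposC := dd_pos K σn2 hKsymm hKpsd hn (a ∪ C)
    have hpvB := postVar_pos K σn2 hKsymm hKpsd hn p (a ∪ B) hpaB
    have hpvC := postVar_pos K σn2 hKsymm hKpsd hn p (a ∪ C) hpaC
    have hlogB : Real.log (subMat (SigmaMat K σn2) (insert p a ∪ B) (insert p a ∪ B)).det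
        = Real.log (subMat (SigmaMat K σn2) (a ∪ B) (a ∪ B)).det
          + Real.log (postVar (SigmaMat K σn2) p (a ∪ B)) := by
      rw [huB, hiB, Real.log_mul hposB.ne' hpvB.ne']
    have hlogC : Real.log (subMat (SigmaMat K σn2) (insert p a ∪ C) (insert p a ∪ C)).det
        = Real.log (subMat (SigmaMat K σn2) (a ∪ C) (a ∪ C)).det
          + Real.log (postVar (SigmaMat K σn2) p (a ∪ C)) := by
      rw [huC, hiC, Real.log_mul hposC.ne' hpvC.ne']
    -- per-point bound
    have hsubsets : a ∪ B ⊆ a ∪ C := Finset.union_subset_union_right hBC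
    have hfar' : ∀ q ∈ (a ∪ C) \ (a ∪ B),
        SigmaMat K σn2 p p - postVar (SigmaMat K σn2) p {q} ≤ δ := by
      intro q hq
      rcases Finset.mem_sdiff.mp hq with ⟨hqU, hqN⟩
      have hqa : q ∉ a := fun h => hqN (Finset.mem_union_left B h)
      have hqC : q ∈ C := (Finset.mem_union.mp hqU).resolve_left hqa
      have hqB : q ∉ B := fun h => hqN (Finset.mem_union_right a h)
      exact hfar p (Finset.mem_insert_self p a) q (Finset.mem_sdiff.mpr ⟨hqC, hqB⟩)
    have hpoint := point_bound K σn2 hKsymm hKpsd hn hsub δ hδ p (a ∪ B) (a ∪ C)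
      hsubsets hpaC hfar'
    have hcard : (((a ∪ C) \ (a ∪ B)).card : ℝ) ≤ ((C \ B).card : ℝ) := by
      have : (a ∪ C) \ (a ∪ B) ⊆ C \ B := by
        intro q hq
        rcases Finset.mem_sdiff.mp hq with ⟨hqU, hqN⟩
        have hqa : q ∉ a := fun h => hqN (Finset.mem_union_left B h)
        exact Finset.mem_sdiff.mpr ⟨(Finset.mem_union.mp hqU).resolve_left hqa,
          fun h => hqN (Finset.mem_union_right a h)⟩
      exact_mod_cast Finset.card_le_card this
    have hlognn : 0 ≤ Real.log (1 + δ / σn2) := by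
      apply Real.log_nonneg
      have : 0 ≤ δ / σn2 := div_nonneg hδ hn.le
      linarith
    have hpoint' : Real.log (postVar (SigmaMat K σn2) p (a ∪ B))
        - Real.log (postVar (SigmaMat K σn2) p (a ∪ C))
        ≤ ((C \ B).card : ℝ) * Real.log (1 + δ / σn2) := by
      have h2 : (((a ∪ C) \ (a ∪ B)).card : ℝ) * Real.log (1 + δ / σn2)
          ≤ ((C \ B).card : ℝ) * Real.log (1 + δ / σn2) :=
        mul_le_mul_of_nonneg_right hcard hlognn
      linarith
    have hih := ih B C hBC haC (fun p' hp' => hfar p' (Finset.mem_insert_of_mem hp'))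
    rw [hlogB, hlogC, Finset.card_insert_of_notMem hpa]
    push_cast
    nlinarith [hih, hpoint', hlognn, Nat.cast_nonneg (α := ℝ) (C \ B).card]


end Bounds
section Ent
open Matrix

variable {D : Type*} [Fintype D] [DecidableEq D]
variable (K : D → D → ℝ) (σs2 σn2 : ℝ)

lemma twoPiE_pos : (0:ℝ) < 2 * Real.pi * Real.exp 1 := by
  have := Real.pi_pos
  have := Real.exp_pos 1
  positivity

lemma condEnt_eq (hKsymm : ∀ p q : D, K p q = K q p) (hKpsd : (Matrix.of K).PosSemidef)
    (hn : 0 < σn2) (a s : Finset D) (h : Disjoint a s) :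
    condEnt (SigmaMat K σn2) a s = (1/2) * ((a.card : ℝ) * Real.log (2 * Real.pi * Real.exp 1)
      + Real.log (subMat (SigmaMat K σn2) (a ∪ s) (a ∪ s)).det
      - Real.log (subMat (SigmaMat K σn2) s s).det) := by
  have hdet := det_union K σn2 hKsymm hKpsd hn a s h
  have hs := dd_pos K σn2 hKsymm hKpsd hn s
  have hus := dd_pos K σn2 hKsymm hKpsd hn (a ∪ s)
  have hpost : 0 < (postCov (SigmaMat K σn2) a s).det := by
    have := hdet
    nlinarith
  have hP := twoPiE_pos
  unfold condEnt
  rw [Real.log_mul (by positivity) hpost.ne', Real.log_pow]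
  have : Real.log (postCov (SigmaMat K σn2) a s).det =
      Real.log (subMat (SigmaMat K σn2) (a ∪ s) (a ∪ s)).det
        - Real.log (subMat (SigmaMat K σn2) s s).det := by
    rw [hdet, Real.log_mul hs.ne' hpost.ne']
    ring
  rw [this]
  ring

lemma ent_eq (hKsymm : ∀ p q : D, K p q = K q p) (hKpsd : (Matrix.of K).PosSemidef)
    (hn : 0 < σn2) (a : Finset D) :
    ent (SigmaMat K σn2) a = (1/2) * ((a.card : ℝ) * Real.log (2 * Real.pi * Real.exp 1)
      + Real.log (subMat (SigmaMat K σn2) a a).det) := by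
  have h := condEnt_eq K σn2 hKsymm hKpsd hn a ∅ (Finset.disjoint_empty_right a)
  unfold ent
  rw [h]
  have he : (subMat (SigmaMat K σn2) (∅:Finset D) (∅:Finset D)).det = 1 := by
    have : IsEmpty ↥(∅ : Finset D) := by rw [Finset.isEmpty_coe_sort]
    exact Matrix.det_isEmpty
  rw [Finset.union_empty, he, Real.log_one]
  ring

lemma ent_step (hKsymm : ∀ p q : D, K p q = K q p) (hKpsd : (Matrix.of K).PosSemidef)
    (hn : 0 < σn2) (a s : Finset D) (h : Disjoint a s) :
    ent (SigmaMat K σn2) (a ∪ s) = ent (SigmaMat K σn2) s + condEnt (SigmaMat K σn2) a s := by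
  rw [ent_eq K σn2 hKsymm hKpsd hn, ent_eq K σn2 hKsymm hKpsd hn,
    condEnt_eq K σn2 hKsymm hKpsd hn a s h, Finset.card_union_of_disjoint h]
  push_cast
  ring

end Ent

section Seg

variable {D : Type*} [Fintype D] [DecidableEq D]
variable (col : D → ℕ) (n k : ℕ)

lemma col_of_mem {x : ℕ → Finset D} (hx : IsPath col n k x) {j : ℕ} (hj1 : 1 ≤ j) (hjn : j ≤ n)
    {q : D} (hq : q ∈ x j) : col q = j :=
  (Finset.mem_filter.mp ((hx j hj1 hjn).1 hq)).2

lemma mem_seg {x : ℕ → Finset D} {a b : ℕ} {q : D} :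
    q ∈ seg x a b ↔ ∃ j, j ∈ Finset.Icc a b ∧ q ∈ x j := by
  simp [seg, Finset.mem_biUnion]

lemma seg_disj {x : ℕ → Finset D} (hx : IsPath col n k x) {i a b : ℕ}
    (hi1 : 1 ≤ i) (hin : i ≤ n) (ha : 1 ≤ a) (hb : b < i) (hbn : b ≤ n) :
    Disjoint (x i) (seg x a b) := by
  rw [Finset.disjoint_left]
  intro q hq hq'
  obtain ⟨j, hj, hqj⟩ := mem_seg.mp hq'
  rw [Finset.mem_Icc] at hj
  have h1 : col q = i := col_of_mem col n k hx hi1 hin hq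
  have h2 : col q = j := col_of_mem col n k hx (le_trans ha hj.1) (le_trans hj.2 hbn) hqj
  omega

lemma seg_succ {x : ℕ → Finset D} {i : ℕ} (hi : 1 ≤ i) :
    seg x 1 i = x i ∪ seg x 1 (i-1) := by
  have h : Finset.Icc 1 i = insert i (Finset.Icc 1 (i-1)) := by
    ext j
    simp only [Finset.mem_Icc, Finset.mem_insert]
    omega
  rw [seg, h, Finset.biUnion_insert]
  rfl

lemma seg_mono_Icc {x : ℕ → Finset D} {a a' b : ℕ} (h : a' ≤ a) :
    seg x a b ⊆ seg x a' b := by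
  apply Finset.biUnion_subset_biUnion_of_subset_left
  intro j hj
  rw [Finset.mem_Icc] at *
  omega

lemma card_seg_le {x : ℕ → Finset D} (hx : IsPath col n k x) {b : ℕ} (hbn : b ≤ n) :
    (seg x 1 b).card ≤ k * b := by
  calc (seg x 1 b).card ≤ ∑ j ∈ Finset.Icc 1 b, (x j).card := Finset.card_biUnion_le
    _ ≤ ∑ _j ∈ Finset.Icc 1 b, k := by
      refine Finset.sum_le_sum fun j hj => ?_
      rw [Finset.mem_Icc] at hj
      exact le_of_eq (hx j hj.1 (le_trans hj.2 hbn)).2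
    _ = k * b := by
      rw [Finset.sum_const, Nat.card_Icc]
      simp [mul_comm]

end Seg
section Chain
open Matrix

variable {D : Type*} [Fintype D] [DecidableEq D]

lemma chain_rule (K : D → D → ℝ) (σn2 : ℝ) (hKsymm : ∀ p q : D, K p q = K q p)
    (hKpsd : (Matrix.of K).PosSemidef) (hn : 0 < σn2)
    (col : D → ℕ) (n k m : ℕ) (x : ℕ → Finset D) (hx : IsPath col n k x) :
    ∀ N, m ≤ N → N ≤ n →
      ent (SigmaMat K σn2) (seg x 1 N) = ent (SigmaMat K σn2) (seg x 1 m)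
        + ∑ i ∈ Finset.Icc (m+1) N, condEnt (SigmaMat K σn2) (x i) (seg x 1 (i-1)) := by
  intro N hmN
  induction N, hmN using Nat.le_induction with
  | base =>
    intro _
    have : Finset.Icc (m+1) m = ∅ := by
      apply Finset.Icc_eq_empty
      omega
    rw [this, Finset.sum_empty, add_zero]
  | succ N hmN ih =>
    intro hN1n
    have hNn : N ≤ n := by omega
    have hIcc : Finset.Icc (m+1) (N+1) = insert (N+1) (Finset.Icc (m+1) N) := by
      ext j
      simp only [Finset.mem_Icc, Finset.mem_insert]
      omega
    have hnotmem : N + 1 ∉ Finset.Icc (m+1) N := by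
      rw [Finset.mem_Icc]; omega
    have hdisj : Disjoint (x (N+1)) (seg x 1 N) :=
      seg_disj col n k hx (by omega) hN1n (le_refl 1) (by omega) hNn
    have hseg : seg x 1 (N+1) = x (N+1) ∪ seg x 1 N := by
      have := seg_succ (x := x) (i := N+1) (by omega)
      simpa using this
    rw [hseg, ent_step K σn2 hKsymm hKpsd hn _ _ hdisj, ih hNn, hIcc,
      Finset.sum_insert hnotmem]
    have h1 : N + 1 - 1 = N := by omega
    rw [h1]
    ring

end Chain
/-- **Theorem 2 (performance guarantee of MEPP(m)).** -/
theorem mepp_performance_guarantee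
    {D : Type*} [Fintype D] [DecidableEq D]
    (r n k m : ℕ) (col : D → ℕ)
    (K : D → D → ℝ) (σs2 σn2 l1 ξ : ℝ)
    (hr : 1 ≤ r) (hk1 : 1 ≤ k) (hkr : k ≤ r) (hm : 1 ≤ m)
    (hs : 0 < σs2) (hn : 0 < σn2) (hl1 : 0 < l1)
    (hξ : ξ = Real.exp (-((m : ℝ) + 1) ^ 2 / (2 * l1 ^ 2)))
    (hKsymm : ∀ p q : D, K p q = K q p)
    (hKpsd : (Matrix.of K).PosSemidef)
    (hKdiag : ∀ p : D, K p p = σs2)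
    (hcol : ∀ p : D, 1 ≤ col p ∧ col p ≤ n)
    (hcolcard : ∀ i : ℕ, 1 ≤ i → i ≤ n → (column col i).card = r)
    (hdecay : ∀ p q : D, (m : ℤ) + 1 ≤ |(col p : ℤ) - (col q : ℤ)| → |K p q| ≤ σs2 * ξ)
    (hsub : ∀ (p q : D) (A : Finset D), p ∉ A → q ∉ A → p ≠ q →
      postVar (SigmaMat K σn2) p A - postVar (SigmaMat K σn2) p (insert q A)
        ≤ postVar (SigmaMat K σn2) p ∅ - postVar (SigmaMat K σn2) p {q})
    (hnm : m + 1 ≤ n)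
    (xstar xE : ℕ → Finset D)
    (hxstar : IsPath col n k xstar)
    (hstar : ∀ x : ℕ → Finset D, IsPath col n k x →
      ent (SigmaMat K σn2) (seg x 1 n) ≤ ent (SigmaMat K σn2) (seg xstar 1 n))
    (hxE : IsPath col n k xE)
    (hE : ∀ x : ℕ → Finset D, IsPath col n k x →
      ent (SigmaMat K σn2) (seg x 1 m)
          + ∑ i ∈ Finset.Icc (m + 1) n, condEnt (SigmaMat K σn2) (x i) (seg x (i - m) (i - 1))
        ≤ ent (SigmaMat K σn2) (seg xE 1 m)
          + ∑ i ∈ Finset.Icc (m + 1) n,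
              condEnt (SigmaMat K σn2) (xE i) (seg xE (i - m) (i - 1))) :
    ent (SigmaMat K σn2) (seg xstar 1 n) - ent (SigmaMat K σn2) (seg xE 1 n)
      ≤ ((k : ℝ) * ((n : ℝ) - (m : ℝ))) ^ 2 * Real.log (1 + ξ ^ 2 / ((σn2 / σs2) * (1 + σn2 / σs2))) := by
  have hξpos : 0 < ξ := by rw [hξ]; exact Real.exp_pos _
  have hc : (0:ℝ) < σs2 + σn2 := by linarith
  set δ0 : ℝ := (σs2 * ξ)^2 / (σs2 + σn2) with hδ0
  have hδ0nn : 0 ≤ δ0 := by positivity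
  set t : ℝ := Real.log (1 + δ0 / σn2) with ht
  have htnn : 0 ≤ t := by
    rw [ht]
    apply Real.log_nonneg
    have : 0 ≤ δ0 / σn2 := div_nonneg hδ0nn hn.le
    linarith
  -- far-column pair bound
  have hfar : ∀ x : ℕ → Finset D, IsPath col n k x → ∀ i ∈ Finset.Icc (m+1) n, ∀ p ∈ x i,
      ∀ q ∈ (seg x 1 (i-1)) \ (seg x (i-m) (i-1)),
      SigmaMat K σn2 p p - postVar (SigmaMat K σn2) p {q} ≤ δ0 := by
    intro x hx i hi p hp q hq
    rw [Finset.mem_Icc] at hi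
    rcases Finset.mem_sdiff.mp hq with ⟨hqC, hqB⟩
    obtain ⟨j, hj, hqj⟩ := mem_seg.mp hqC
    rw [Finset.mem_Icc] at hj
    have hji : j ≤ i - m - 1 := by
      by_contra hcon
      exact hqB (mem_seg.mpr ⟨j, Finset.mem_Icc.mpr ⟨by omega, hj.2⟩, hqj⟩)
    have hcolp : col p = i := col_of_mem col n k hx (by omega) hi.2 hp
    have hcolq : col q = j := col_of_mem col n k hx (by omega) (by omega) hqj
    have hfarcol : (m:ℤ) + 1 ≤ |(col p : ℤ) - (col q : ℤ)| := by
      rw [hcolp, hcolq, abs_of_nonneg (by omega : (0:ℤ) ≤ (i:ℤ) - (j:ℤ))]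
      omega
    have hK := hdecay p q hfarcol
    have hpq : p ≠ q := by
      intro h
      rw [h, hcolq] at hcolp
      omega
    rw [twoPoint K σs2 σn2 hKsymm hKdiag hs hn p q hpq, hδ0]
    have hsq : K p q ^ 2 ≤ (σs2 * ξ)^2 := by
      have h1 : |K p q| ^ 2 ≤ (σs2 * ξ)^2 := by
        apply pow_le_pow_left₀ (abs_nonneg _) hK
      rwa [sq_abs] at h1
    gcongr
  -- cardinality bound on the ignored conditioning set
  have hcardCB : ∀ x : ℕ → Finset D, IsPath col n k x → ∀ i ∈ Finset.Icc (m+1) n,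
      ((seg x 1 (i-1)) \ (seg x (i-m) (i-1))).card ≤ k * (n - m) := by
    intro x hx i hi
    rw [Finset.mem_Icc] at hi
    have hsub' : (seg x 1 (i-1)) \ (seg x (i-m) (i-1)) ⊆ seg x 1 (i-m-1) := by
      intro q hq
      rcases Finset.mem_sdiff.mp hq with ⟨hqC, hqB⟩
      obtain ⟨j, hj, hqj⟩ := mem_seg.mp hqC
      rw [Finset.mem_Icc] at hj
      have hji : j ≤ i - m - 1 := by
        by_contra hcon
        exact hqB (mem_seg.mpr ⟨j, Finset.mem_Icc.mpr ⟨by omega, hj.2⟩, hqj⟩)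
      exact mem_seg.mpr ⟨j, Finset.mem_Icc.mpr ⟨hj.1, hji⟩, hqj⟩
    calc ((seg x 1 (i-1)) \ (seg x (i-m) (i-1))).card
        ≤ (seg x 1 (i-m-1)).card := Finset.card_le_card hsub'
      _ ≤ k * (i-m-1) := card_seg_le col n k hx (by omega)
      _ ≤ k * (n-m) := Nat.mul_le_mul_left _ (by omega)
  -- per-column disjointness facts
  have hdisjfacts : ∀ x : ℕ → Finset D, IsPath col n k x → ∀ i ∈ Finset.Icc (m+1) n,
      Disjoint (x i) (seg x 1 (i-1)) ∧ seg x (i-m) (i-1) ⊆ seg x 1 (i-1) := by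
    intro x hx i hi
    rw [Finset.mem_Icc] at hi
    constructor
    · exact seg_disj col n k hx (by omega) hi.2 (le_refl 1) (by omega) (by omega)
    · exact seg_mono_Icc (by omega)
  -- chain rules
  have hCRstar := chain_rule K σn2 hKsymm hKpsd hn col n k m xstar hxstar n (by omega) (le_refl n)
  have hCRE := chain_rule K σn2 hKsymm hKpsd hn col n k m xE hxE n (by omega) (le_refl n)
  -- Step A : true entropy of xstar is below its surrogate objective
  have hA : ent (SigmaMat K σn2) (seg xstar 1 n) ≤ ent (SigmaMat K σn2) (seg xstar 1 m)
      + ∑ i ∈ Finset.Icc (m + 1) n,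
          condEnt (SigmaMat K σn2) (xstar i) (seg xstar (i - m) (i - 1)) := by
    rw [hCRstar]
    refine add_le_add (le_refl _) (Finset.sum_le_sum fun i hi => ?_)
    obtain ⟨hdisjC, hBC⟩ := hdisjfacts xstar hxstar i hi
    have hdisjB : Disjoint (xstar i) (seg xstar (i-m) (i-1)) :=
      Finset.disjoint_of_subset_right hBC hdisjC
    rw [condEnt_eq K σn2 hKsymm hKpsd hn _ _ hdisjC, condEnt_eq K σn2 hKsymm hKpsd hn _ _ hdisjB]
    have hmono := diff_mono K σn2 hKsymm hKpsd hn (xstar i) (seg xstar (i-m) (i-1))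
      (seg xstar 1 (i-1)) hBC hdisjC
    linarith
  -- Step B : optimality of xE for the surrogate
  have hB := hE xstar hxstar
  -- Step C : surrogate of xE is close to its true entropy
  have hterm : ∀ i ∈ Finset.Icc (m + 1) n,
      condEnt (SigmaMat K σn2) (xE i) (seg xE (i - m) (i - 1))
        ≤ condEnt (SigmaMat K σn2) (xE i) (seg xE 1 (i - 1))
          + (1/2) * ((k:ℝ) * (((k * (n - m) : ℕ)):ℝ) * t) := by
    intro i hi
    obtain ⟨hdisjC, hBC⟩ := hdisjfacts xE hxE i hi
    have hdisjB : Disjoint (xE i) (seg xE (i-m) (i-1)) :=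
      Finset.disjoint_of_subset_right hBC hdisjC
    have hbound := diff_bound K σn2 hKsymm hKpsd hn hsub δ0 hδ0nn (xE i)
      (seg xE (i-m) (i-1)) (seg xE 1 (i-1)) hBC hdisjC
      (fun p hp q hq => hfar xE hxE i hi p hp q hq)
    have hi' := Finset.mem_Icc.mp hi
    have hik : (xE i).card = k := (hxE i (by omega) hi'.2).2
    have hcard1 : ((xE i).card : ℝ) = (k : ℝ) := by exact_mod_cast hik
    have hcard2 : (((seg xE 1 (i-1)) \ (seg xE (i-m) (i-1))).card : ℝ)
        ≤ (((k * (n - m) : ℕ)):ℝ) := by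
      exact_mod_cast hcardCB xE hxE i hi
    rw [condEnt_eq K σn2 hKsymm hKpsd hn _ _ hdisjC, condEnt_eq K σn2 hKsymm hKpsd hn _ _ hdisjB]
    have hmul : ((xE i).card : ℝ) * ((((seg xE 1 (i-1)) \ (seg xE (i-m) (i-1))).card : ℝ) * t)
        ≤ (k:ℝ) * ((((k * (n - m) : ℕ)):ℝ) * t) := by
      rw [hcard1]
      apply mul_le_mul_of_nonneg_left _ (by positivity)
      exact mul_le_mul_of_nonneg_right hcard2 htnn
    rw [← ht] at hbound
    linarith
  have hsumC : ∑ i ∈ Finset.Icc (m + 1) n,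
        condEnt (SigmaMat K σn2) (xE i) (seg xE (i - m) (i - 1))
      ≤ (∑ i ∈ Finset.Icc (m + 1) n, condEnt (SigmaMat K σn2) (xE i) (seg xE 1 (i - 1)))
        + ((n - m : ℕ):ℝ) * ((1/2) * ((k:ℝ) * (((k * (n - m) : ℕ)):ℝ) * t)) := by
    calc ∑ i ∈ Finset.Icc (m + 1) n, condEnt (SigmaMat K σn2) (xE i) (seg xE (i - m) (i - 1))
        ≤ ∑ i ∈ Finset.Icc (m + 1) n, (condEnt (SigmaMat K σn2) (xE i) (seg xE 1 (i - 1))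
            + (1/2) * ((k:ℝ) * (((k * (n - m) : ℕ)):ℝ) * t)) := Finset.sum_le_sum hterm
      _ = _ := by
          rw [Finset.sum_add_distrib, Finset.sum_const, Nat.card_Icc]
          have : n + 1 - (m + 1) = n - m := by omega
          rw [this, nsmul_eq_mul]
  -- combine the three steps
  have hkey : ent (SigmaMat K σn2) (seg xstar 1 n) - ent (SigmaMat K σn2) (seg xE 1 n)
      ≤ ((n - m : ℕ):ℝ) * ((1/2) * ((k:ℝ) * (((k * (n - m) : ℕ)):ℝ) * t)) := by
    rw [hCRE]
    linarith
  -- final numerics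
  have hnm1 : ((n - m : ℕ):ℝ) = (n:ℝ) - (m:ℝ) := by
    have : m ≤ n := by omega
    exact Nat.cast_sub this
  have hkmn : (((k * (n - m) : ℕ)):ℝ) = (k:ℝ) * ((n:ℝ) - (m:ℝ)) := by
    push_cast [Nat.cast_sub (show m ≤ n by omega)]
    ring
  have hlogeq : t = Real.log (1 + ξ ^ 2 / ((σn2 / σs2) * (1 + σn2 / σs2))) := by
    rw [ht]
    congr 1
    rw [hδ0]
    field_simp
  rw [← hlogeq]
  refine le_trans hkey ?_
  rw [hnm1, hkmn]
  have hknm : (0:ℝ) ≤ (k:ℝ) * ((n:ℝ) - (m:ℝ)) := by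
    have h1 : (1:ℝ) ≤ (n:ℝ) - (m:ℝ) := by
      have : m + 1 ≤ n := hnm
      have := Nat.cast_le (α := ℝ).mpr this
      push_cast at this ⊢
      linarith
    positivity
  nlinarith [htnn, hknm, sq_nonneg ((k:ℝ) * ((n:ℝ) - (m:ℝ)))]
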